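/- Let m,n,d > 1 with n = md and m even, and assume k contains a primitive n-th root of unity with char k not dividing n. Let c = (c₁,c₂) ∈ K(n) with 2c = 0. Then the automorphism Φ(c) of G(n) is compatible with G(m) if and only if c₁ = 0 and, in addition, either d is even or c₂ = 0. In particular, the intersection of Φ(K(n)[2]) with the group of automorphisms compatible with G(m) is Φ({0} × Ẑ(n)[2]) ≅ (ℤ/2ℤ)^g when d is even, and is trivial when d is odd. -/

import Mathlib

namespace ThetaPaper

variable {g n : ℕ} {k : Type*} [Field k]

/-- `Z(n) = (ℤ/nℤ)^g`. -/
abbrev ZGrp (g n : ℕ) := Fin g → ZMod n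

/-- `Ẑ(n) = Hom(Z(n), kˣ)`, the group of `kˣ`-valued characters of `Z(n)`,
written additively. -/
abbrev ZHat (g n : ℕ) (k : Type*) [Field k] := AddChar (ZGrp g n) kˣ

/-- `K(n) = Z(n) × Ẑ(n)`. -/
abbrev KGrp (g n : ℕ) (k : Type*) [Field k] := ZGrp g n × ZHat g n k

/-- The commutator pairing `e_n((x₁,y₁),(x₂,y₂)) = y₁(x₂)·y₂(x₁)⁻¹`. -/
def en (v w : KGrp g n k) : kˣ := v.2 w.1 * (w.2 v.1)⁻¹

/-- The level-`n` Heisenberg group `G(n)`, as the set `kˣ × Z(n) × Ẑ(n)`. -/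
@[ext]
structure Heis (g n : ℕ) (k : Type*) [Field k] where
  t : kˣ
  x : ZGrp g n
  y : ZHat g n k

namespace Heis

/-- The Heisenberg multiplication
`(α₁,x₁,y₁)·(α₂,x₂,y₂) = (α₁α₂·y₂(x₁), x₁+x₂, y₁+y₂)`. -/
instance : Mul (Heis g n k) :=
  ⟨fun a b => ⟨a.t * b.t * b.y a.x, a.x + b.x, a.y + b.y⟩⟩

instance : One (Heis g n k) := ⟨⟨1, 0, 0⟩⟩

instance : Inv (Heis g n k) :=
  ⟨fun a => ⟨a.t⁻¹ * a.y a.x, -a.x, -a.y⟩⟩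

@[simp] lemma mul_t (a b : Heis g n k) : (a * b).t = a.t * b.t * b.y a.x := rfl
@[simp] lemma mul_x (a b : Heis g n k) : (a * b).x = a.x + b.x := rfl
@[simp] lemma mul_y (a b : Heis g n k) : (a * b).y = a.y + b.y := rfl
@[simp] lemma one_t : (1 : Heis g n k).t = 1 := rfl
@[simp] lemma one_x : (1 : Heis g n k).x = 0 := rfl
@[simp] lemma one_y : (1 : Heis g n k).y = 0 := rfl
@[simp] lemma inv_t (a : Heis g n k) : a⁻¹.t = a.t⁻¹ * a.y a.x := rfl
@[simp] lemma inv_x (a : Heis g n k) : a⁻¹.x = -a.x := rfl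
@[simp] lemma inv_y (a : Heis g n k) : a⁻¹.y = -a.y := rfl

instance : Group (Heis g n k) :=
  Group.ofLeftAxioms
    (fun a b c => by
      ext <;>
        simp [AddChar.map_add_eq_mul, mul_assoc, mul_comm, mul_left_comm, add_assoc])
    (fun a => by ext <;> simp)
    (fun a => by
      ext <;> simp [AddChar.map_neg_eq_inv, mul_comm, mul_left_comm, mul_assoc])

/-- The canonical projection `π : G(n) → K(n)`, `(α,x,y) ↦ (x,y)`. -/
def toK (h : Heis g n k) : KGrp g n k := (h.x, h.y)

/-- The automorphism `D₋₁ : (α,x,y) ↦ (α,−x,−y)`. -/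
def Dneg (h : Heis g n k) : Heis g n k := ⟨h.t, -h.x, -h.y⟩

/-- A symmetric element of the Heisenberg group: `D₋₁(h) = h⁻¹`. -/
def IsSymElem (h : Heis g n k) : Prop := Dneg h = h⁻¹

end Heis

/-- The `ψ`-semi-character identity:
`χ(v+w) = χ(v)·χ(w)·[ψ(w)₂(ψ(v)₁)]·[w₂(v₁)]⁻¹`. -/
def IsSemiChar (ψ : KGrp g n k → KGrp g n k) (χ : KGrp g n k → kˣ) : Prop :=
  ∀ v w : KGrp g n k,
    χ (v + w) = χ v * χ w * (ψ w).2 (ψ v).1 * ((w.2 v.1)⁻¹ : kˣ)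

/-- A symmetric (semi-)character: `χ(−v) = χ(v)`. -/
def IsSymmChar (χ : KGrp g n k → kˣ) : Prop := ∀ v : KGrp g n k, χ (-v) = χ v

/-- `ψ̄ ∈ Sp(K(n))`: an additive automorphism preserving the pairing `e_n`. -/
def IsSymplectic (ψ : KGrp g n k ≃+ KGrp g n k) : Prop :=
  ∀ v w : KGrp g n k, en (ψ v) (ψ w) = en v w


/-- The automorphism `Φ(c) : (α,x,y) ↦ (α·e_n(c,(x,y)), x, y)` of `G(n)`. -/
def Phic (c : KGrp g n k) (h : Heis g n k) : Heis g n k :=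
  ⟨h.t * en c h.toK, h.x, h.y⟩

/-- The subgroup `{1} × {0} × ν̂_{d,n}(Ẑ(d))` of `G(n)`, where `ν̂_{d,n}(Ẑ(d))` is
identified with the `d`-torsion `Ẑ(n)[d]`. -/
def HdSet (g n : ℕ) (k : Type*) [Field k] (d : ℕ) : Set (Heis g n k) :=
  {h | h.t = 1 ∧ h.x = 0 ∧ d • h.y = 0}

/-- A map `f : G(n) → G(n)` is *compatible with `G(m)`* (where `n = md`,
identifying `μ_{m,n}(Z(m))` with `d·Z(n)` and `ν̂_{d,n}(Ẑ(d))` with `Ẑ(n)[d]`). -/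
def CompatGm (g n : ℕ) (k : Type*) [Field k] (d : ℕ)
    (f : Heis g n k → Heis g n k) : Prop :=
  f '' HdSet g n k d = HdSet g n k d ∧
  (∀ h : Heis g n k, h.t = 1 → h.x = 0 → f h * h⁻¹ ∈ HdSet g n k d) ∧
  (∀ h : Heis g n k, h.t = 1 → (∃ x' : ZGrp g n, h.x = d • x') → h.y = 0 →
    f h * h⁻¹ ∈ HdSet g n k d)

/-- for `2`-torsion `c = (c₁,c₂) ∈ K(n)`, the automorphism `Φ(c)` is
compatible with `G(m)` iff `c₁ = 0` and (either `d` is even or `c₂ = 0`). In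
particular, among the `Φ(c)` with `2c = 0`, the compatible ones are exactly those
with `c ∈ {0} × Ẑ(n)[2]` when `d` is even, and only `Φ(0)` when `d` is odd. -/
theorem Phic_compatible_iff (g m n d : ℕ) (hg : 1 ≤ g)
    (hm : 1 < m) (hn : 1 < n) (hd : 1 < d) (hmd : n = m * d) (hmeven : Even m)
    (k : Type*) [Field k] (ζ : k) (hζ : IsPrimitiveRoot ζ n) (hchar : (n : k) ≠ 0) :
    (∀ c : KGrp g n k, c + c = 0 →
      (CompatGm g n k d (Phic c) ↔ (c.1 = 0 ∧ (Even d ∨ c.2 = 0)))) ∧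
    (Even d →
      {c : KGrp g n k | c + c = 0 ∧ CompatGm g n k d (Phic c)} =
        {c : KGrp g n k | c + c = 0 ∧ c.1 = 0}) ∧
    (¬ Even d →
      {c : KGrp g n k | c + c = 0 ∧ CompatGm g n k d (Phic c)} = {0}) := by
  have hn0 : n ≠ 0 := by omega
  haveI : NeZero n := ⟨hn0⟩
  -- character separation: if every character kills c₁ then c₁ = 0
  have hsep : ∀ c₁ : ZGrp g n, (∀ ψ : ZHat g n k, ψ c₁ = 1) → c₁ = 0 := by
    intro c₁ hall
    have hζu := hζ.isUnit_unit (by omega : n ≠ 0)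
    have hpow : (hζ.isUnit (by omega : n ≠ 0)).unit ^ n = 1 := hζu.pow_eq_one
    funext i
    have := hall ((AddChar.zmodChar n hpow).compAddMonoidHom
      (Pi.evalAddMonoidHom (fun _ : Fin g => ZMod n) i))
    rw [AddChar.compAddMonoidHom_apply] at this
    have h2 : (hζ.isUnit (by omega : n ≠ 0)).unit ^ (c₁ i).val = 1 := by
      rw [← AddChar.zmodChar_apply hpow]; simpa using this
    have hdvd : n ∣ (c₁ i).val := (hζu.pow_eq_one_iff_dvd _).mp h2
    have hlt : (c₁ i).val < n := ZMod.val_lt _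
    have hv0 : (c₁ i).val = 0 := Nat.eq_zero_of_dvd_of_lt hdvd hlt
    simpa [ZMod.val_eq_zero] using hv0
  have main : ∀ c : KGrp g n k, c + c = 0 →
      (CompatGm g n k d (Phic c) ↔ (c.1 = 0 ∧ (Even d ∨ c.2 = 0))) := by
    intro c hc
    have hc2 : c.2 + c.2 = 0 := congrArg Prod.snd hc
    have hc2sq : ∀ x : ZGrp g n, c.2 x * c.2 x = 1 := by
      intro x
      have := congrArg (fun ψ : ZHat g n k => ψ x) hc2
      simpa using this
    constructor
    · rintro ⟨h1, h2, h3⟩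
      constructor
      · -- use condition (2) with arbitrary characters
        apply hsep
        intro ψ
        have := h2 ⟨1, 0, ψ⟩ rfl rfl
        obtain ⟨ht, -, -⟩ := this
        have ht' : (ψ c.1)⁻¹ = 1 := by
          simpa [Phic, en, Heis.toK, AddChar.map_zero_eq_one] using ht
        exact inv_eq_one.mp ht'
      · -- use condition (3)
        by_cases hde : Even d
        · exact Or.inl hde
        · right
          have hodd : Odd d := Nat.odd_iff.mpr (Nat.not_even_iff.mp hde)
          obtain ⟨j, hj⟩ := hodd
          ext x
          have := h3 ⟨1, d • x, 0⟩ rfl ⟨x, rfl⟩ rfl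
          obtain ⟨ht, -, -⟩ := this
          have ht' : c.2 (d • x) = 1 := by
            simpa [Phic, en, Heis.toK, AddChar.map_zero_eq_one] using ht
          have hpow : (c.2 x) ^ d = 1 := by
            rw [← AddChar.map_nsmul_eq_pow]; exact ht'
          have hone : (c.2 x) ^ 2 = 1 := by rw [pow_two]; exact hc2sq x
          rw [hj, pow_add, pow_mul, hone, one_pow, one_mul, pow_one] at hpow
          simpa using hpow
    · rintro ⟨hc1, hdc2⟩
      have hden : ∀ x : ZGrp g n, c.2 (d • x) = 1 := by
        intro x
        rw [AddChar.map_nsmul_eq_pow]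
        rcases hdc2 with ⟨j, hj⟩ | h0
        · have : d = 2 * j := by omega
          rw [this, pow_mul, pow_two, hc2sq, one_pow]
        · simp [h0]
      have hfix : ∀ h : Heis g n k, h.x = 0 → Phic c h = h := by
        intro h hx
        have : en c h.toK = 1 := by
          simp [en, Heis.toK, hx, hc1, AddChar.map_zero_eq_one]
        show Heis.mk (h.t * en c h.toK) h.x h.y = h
        rw [this, mul_one]
      refine ⟨?_, ?_, ?_⟩
      · ext h
        constructor
        · rintro ⟨a, ⟨hat, hax, hay⟩, rfl⟩
          rw [hfix a hax]
          exact ⟨hat, hax, hay⟩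
        · rintro ⟨hat, hax, hay⟩
          exact ⟨h, ⟨hat, hax, hay⟩, hfix h hax⟩
      · intro h ht hx
        rw [hfix h hx, mul_inv_cancel]
        exact ⟨rfl, rfl, by ext x; simp⟩
      · rintro ⟨t, x, y⟩ ht ⟨x', hx'⟩ hy
        dsimp only at ht hx' hy
        subst ht hy hx'
        have he : en c (Heis.toK ⟨1, d • x', 0⟩) = 1 := by
          show c.2 (d • x') * ((0 : ZHat g n k) c.1)⁻¹ = 1
          rw [hden x', AddChar.zero_apply, inv_one, mul_one]
        refine ⟨?_, by simp [Phic], by simp [Phic]⟩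
        show (1 * en c (Heis.toK ⟨1, d • x', 0⟩)) * (1⁻¹ * (0 : ZHat g n k) (d • x')) *
          ((-(0 : ZHat g n k)) (d • x')) = 1
        rw [he]
        simp
  refine ⟨main, ?_, ?_⟩
  · intro hde
    ext c
    simp only [Set.mem_setOf_eq]
    constructor
    · rintro ⟨h2, hcompat⟩
      exact ⟨h2, ((main c h2).mp hcompat).1⟩
    · rintro ⟨h2, h1⟩
      exact ⟨h2, (main c h2).mpr ⟨h1, Or.inl hde⟩⟩
  · intro hde
    ext c
    simp only [Set.mem_setOf_eq, Set.mem_singleton_iff]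
    constructor
    · rintro ⟨h2, hcompat⟩
      obtain ⟨hc1, hor⟩ := (main c h2).mp hcompat
      rcases hor with h | hc2
      · exact absurd h hde
      · exact Prod.ext hc1 hc2
    · rintro rfl
      refine ⟨by abel, (main 0 (by abel)).mpr ⟨rfl, Or.inr rfl⟩⟩

end ThetaPaper
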